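/- The Measure Extension Axiom MEA is equivalent to the following statement: for all Polish spaces X, Y, every A ⊆ X × Y, and every Borel probability measure μ on X such that the complement of proj_X(A) is μ-null, there exist a Borel set B ⊆ X with μ(B) = 1 and a function f : X → Y, measurable with respect to the completion of μ, such that (x, f(x)) ∈ A for every x ∈ B. -/

import Mathlib

open MeasureTheory

/-- The Measure Extension Axiom `MEA`: for all Polish spaces `X`, `Y`, every set
`A ⊆ X × Y`, and every Borel probability measure `μ` on `X` such that the complement of the
projection `proj_X(A)` is `μ`-null, there is a Borel probability measure `ν` on `X × Y` whose
pushforward under the first projection is `μ` and such that the complement of `A` is `ν`-null. -/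
def MEA : Prop :=
  ∀ (X Y : Type) [TopologicalSpace X] [TopologicalSpace Y] [PolishSpace X] [PolishSpace Y]
    [MeasurableSpace X] [MeasurableSpace Y] [BorelSpace X] [BorelSpace Y],
    ∀ (A : Set (X × Y)) (μ : ProbabilityMeasure X),
      (μ : Measure X) (Prod.fst '' A)ᶜ = 0 →
      ∃ ν : ProbabilityMeasure (X × Y),
        (ν : Measure (X × Y)).map Prod.fst = (μ : Measure X) ∧
        (ν : Measure (X × Y)) Aᶜ = 0

section AuxMEA

open Set Function
open scoped ENNReal

lemma measurable_invFun_of_measurableEmbedding' {Y Z : Type*} [MeasurableSpace Y]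
    [MeasurableSpace Z] [Nonempty Y] {e : Y → Z} (he : MeasurableEmbedding e) :
    Measurable (Function.invFun e) := by
  classical
  intro S hS
  by_cases hc : (Classical.choice ‹Nonempty Y›) ∈ S
  · have hset : Function.invFun e ⁻¹' S = e '' S ∪ (Set.range e)ᶜ := by
      ext z; constructor
      · intro hz
        by_cases hr : z ∈ Set.range e
        · obtain ⟨y, rfl⟩ := hr
          exact Or.inl ⟨y, by
            simpa [Function.leftInverse_invFun he.injective y] using hz, rfl⟩
        · exact Or.inr hr
      · rintro (⟨y, hy, rfl⟩ | hr)
        · simpa [Set.mem_preimage, Function.leftInverse_invFun he.injective y] using hy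
        · have hz : Function.invFun e z = Classical.choice ‹Nonempty Y› :=
            Function.invFun_neg (by simpa [Set.range] using hr)
          simpa [Set.mem_preimage, hz] using hc
    rw [hset]
    exact (he.measurableSet_image' hS).union he.measurableSet_range.compl
  · have hset : Function.invFun e ⁻¹' S = e '' S := by
      ext z; constructor
      · intro hz
        by_cases hr : z ∈ Set.range e
        · obtain ⟨y, rfl⟩ := hr
          exact ⟨y, by
            simpa [Set.mem_preimage, Function.leftInverse_invFun he.injective y] using hz, rfl⟩
        · exfalso
          have hz' : Function.invFun e z = Classical.choice ‹Nonempty Y› :=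
            Function.invFun_neg (by simpa [Set.range] using hr)
          rw [Set.mem_preimage, hz'] at hz
          exact hc hz
      · rintro ⟨y, hy, rfl⟩
        simpa [Set.mem_preimage, Function.leftInverse_invFun he.injective y] using hy
    rw [hset]
    exact he.measurableSet_image' hS

/-- The unit interval as a compact Polish space. -/
abbrev ZIcc : Type := ↥(Set.Icc (0:ℝ) 1)

lemma exists_selection_Icc {X : Type} [TopologicalSpace X] [PolishSpace X] [MeasurableSpace X]
    [BorelSpace X] (ν' : Measure (X × ZIcc)) [IsProbabilityMeasure ν']
    {C' : Set (X × ZIcc)} (hC'm : MeasurableSet C') (hC'1 : ν' C' = 1) :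
    ∃ B : Set X, MeasurableSet B ∧ ν'.map Prod.fst B = 1 ∧
      ∃ g : X → ZIcc, Measurable g ∧ ∀ x ∈ B, (x, g x) ∈ C' := by
  classical
  -- closed approximations
  have hreg : ∀ n : ℕ, ∃ F : Set (X × ZIcc), F ⊆ C' ∧ IsClosed F ∧ ν' Fᶜ ≤ ((n : ℝ≥0∞) + 1)⁻¹ := by
    intro n
    obtain ⟨F, hFC, hFcl, hF⟩ := hC'm.exists_isClosed_lt_add
      (ne_of_eq_of_ne hC'1 ENNReal.one_ne_top)
      (ε := ((n : ℝ≥0∞) + 1)⁻¹) (by simp)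
    refine ⟨F, hFC, hFcl, ?_⟩
    rw [prob_compl_eq_one_sub hFcl.measurableSet]
    rw [hC'1] at hF
    rw [tsub_le_iff_right, add_comm]
    exact hF.le
  choose F hFC hFcl hFν using hreg
  set D : ℕ → Set X := fun n => Prod.fst '' F n with hD
  have hDcl : ∀ n, IsClosed (D n) := fun n => isClosedMap_fst_of_compactSpace _ (hFcl n)
  set B := ⋃ n, D n with hBdef
  have hBm : MeasurableSet B := MeasurableSet.iUnion fun n => (hDcl n).measurableSet
  haveI : IsProbabilityMeasure (ν'.map Prod.fst) :=
    Measure.isProbabilityMeasure_map measurable_fst.aemeasurable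
  have hkey : ∀ n : ℕ, (ν'.map Prod.fst) Bᶜ ≤ ((n : ℝ≥0∞) + 1)⁻¹ := by
    intro n
    have h1 : (ν'.map Prod.fst) Bᶜ ≤ (ν'.map Prod.fst) (D n)ᶜ :=
      measure_mono (compl_subset_compl.2 (subset_iUnion D n))
    rw [Measure.map_apply measurable_fst (hDcl n).measurableSet.compl] at h1
    refine h1.trans ((measure_mono ?_).trans (hFν n))
    intro p hp hpF
    exact hp ⟨p, hpF, rfl⟩
  have hB0 : (ν'.map Prod.fst) Bᶜ = 0 := by
    by_contra h
    obtain ⟨n, hn⟩ := ENNReal.exists_inv_nat_lt h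
    have h2 : ((n : ℝ≥0∞) + 1)⁻¹ ≤ ((n : ℝ≥0∞))⁻¹ := by gcongr; exact le_self_add
    exact absurd ((hkey n).trans h2) (not_le.2 hn)
  have hB1 : (ν'.map Prod.fst) B = 1 := (prob_compl_eq_zero_iff hBm).mp hB0
  -- sections
  set sect : ℕ → X → Set ℝ := fun n x => Subtype.val '' {z : ZIcc | (x, z) ∈ F n} with hsect
  have hsect_cpt : ∀ (n : ℕ) (x : X), IsCompact (sect n x) := by
    intro n x
    have h1 : IsClosed {z : ZIcc | (x, z) ∈ F n} :=
      (hFcl n).preimage (Continuous.prodMk_right x)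
    exact (h1.isCompact).image continuous_subtype_val
  set NN : X → ℕ := fun x => sInf {n | x ∈ D n} with hNN
  have hNN_mem : ∀ x ∈ B, x ∈ D (NN x) := by
    intro x hx
    obtain ⟨n, hn⟩ := mem_iUnion.1 hx
    have hne : {n | x ∈ D n}.Nonempty := ⟨n, hn⟩
    exact Nat.sInf_mem hne
  set g : X → ℝ := fun x => if x ∈ B then sInf (sect (NN x) x) else 0 with hg
  have hsect_ne : ∀ (x : X) (n : ℕ), x ∈ D n → (sect n x).Nonempty := by
    intro x n hx
    obtain ⟨p, hpF, hpx⟩ := hx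
    have hmem : (x, p.2) ∈ F n := by rw [← hpx]; exact hpF
    exact ⟨(p.2 : ℝ), ⟨p.2, hmem, rfl⟩⟩
  have hg_mem : ∀ x ∈ B, ∃ z : ZIcc, (x, z) ∈ F (NN x) ∧ (z : ℝ) = g x := by
    intro x hx
    have hxD := hNN_mem x hx
    have hne := hsect_ne x (NN x) hxD
    obtain ⟨z, hz, hzval⟩ := (hsect_cpt (NN x) x).sInf_mem hne
    refine ⟨z, hz, ?_⟩
    rw [hg]
    simp only [if_pos hx]
    exact hzval
  -- measurability of g
  have hgm : Measurable g := by
    apply measurable_of_Iio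
    intro a
    set P : ℕ → Set X := fun n =>
      ⋃ q : ℚ, ⋃ (_ : (q : ℝ) < a), Prod.fst '' (F n ∩ {p | (p.2 : ℝ) ≤ (q : ℝ)}) with hP
    have hPm : ∀ n, MeasurableSet (P n) := by
      intro n
      refine MeasurableSet.iUnion fun q => MeasurableSet.iUnion fun _ => ?_
      have hcl : IsClosed (F n ∩ {p : X × ZIcc | (p.2 : ℝ) ≤ (q : ℝ)}) :=
        (hFcl n).inter (isClosed_Iic.preimage (continuous_subtype_val.comp continuous_snd))
      exact (isClosedMap_fst_of_compactSpace _ hcl).measurableSet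
    set E : ℕ → Set X := fun n => D n \ ⋃ m, ⋃ (_ : m < n), D m with hE
    have hEm : ∀ n, MeasurableSet (E n) := fun n =>
      (hDcl n).measurableSet.diff
        (MeasurableSet.iUnion fun m => MeasurableSet.iUnion fun _ => (hDcl m).measurableSet)
    have hNNeq : ∀ (x : X) (n : ℕ), x ∈ E n → NN x = n := by
      intro x n hx
      refine le_antisymm (Nat.sInf_le hx.1) ?_
      by_contra h
      push_neg at h
      exact hx.2 (mem_iUnion.2 ⟨NN x, mem_iUnion.2 ⟨h,
        hNN_mem x (mem_iUnion.2 ⟨n, hx.1⟩)⟩⟩)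
    have hclaim : g ⁻¹' Iio a = (⋃ n, E n ∩ P n) ∪ (Bᶜ ∩ {_x : X | (0:ℝ) < a}) := by
      ext x
      simp only [mem_preimage, mem_Iio, mem_union, mem_iUnion, mem_inter_iff]
      by_cases hx : x ∈ B
      · have hgx : g x = sInf (sect (NN x) x) := by rw [hg]; simp [hx]
        rw [hgx]
        constructor
        · intro hlt
          refine Or.inl ⟨NN x, ⟨hNN_mem x hx, ?_⟩, ?_⟩
          · intro hmem
            obtain ⟨m, hm⟩ := mem_iUnion.1 hmem
            obtain ⟨hmlt, hxm⟩ := mem_iUnion.1 hm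
            exact absurd (Nat.sInf_le hxm) (not_le.2 hmlt)
          · obtain ⟨q, hq1, hq2⟩ := exists_rat_btwn hlt
            obtain ⟨z, hzF, hzval⟩ := hg_mem x hx
            refine mem_iUnion.2 ⟨q, mem_iUnion.2 ⟨hq2, ⟨(x, z), ⟨hzF, ?_⟩, rfl⟩⟩⟩
            simp only [mem_setOf_eq]
            rw [hzval, hgx]
            exact hq1.le
        · rintro (⟨n, hEn, hPn⟩ | ⟨hxc, _⟩)
          · have hn : NN x = n := hNNeq x n hEn
            obtain ⟨q, hq⟩ := mem_iUnion.1 hPn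
            obtain ⟨hqa, hq2⟩ := mem_iUnion.1 hq
            obtain ⟨p, ⟨hpF, hple⟩, hpx⟩ := hq2
            have hmemF : (x, p.2) ∈ F n := by rw [← hpx]; exact hpF
            have hmem : (p.2 : ℝ) ∈ sect n x := ⟨p.2, hmemF, rfl⟩
            have hle := csInf_le (hsect_cpt n x).bddBelow hmem
            rw [hn]
            exact lt_of_le_of_lt (hle.trans hple) hqa
          · exact absurd hx hxc
      · have hgx : g x = 0 := by rw [hg]; simp [hx]
        rw [hgx]
        constructor
        · intro h0
          exact Or.inr ⟨hx, h0⟩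
        · rintro (⟨n, hEn, _⟩ | ⟨_, h0⟩)
          · exact absurd (mem_iUnion.2 ⟨n, hEn.1⟩) hx
          · exact h0
    rw [hclaim]
    exact (MeasurableSet.iUnion fun n => (hEm n).inter (hPm n)).union
      (hBm.compl.inter (MeasurableSet.const _))
  -- final function into ZIcc
  refine ⟨B, hBm, hB1, fun x => Set.projIcc 0 1 zero_le_one (g x),
    continuous_projIcc.measurable.comp hgm, ?_⟩
  intro x hx
  obtain ⟨z, hzF, hzval⟩ := hg_mem x hx
  show (x, Set.projIcc 0 1 zero_le_one (g x)) ∈ C'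
  have heq : Set.projIcc 0 1 zero_le_one (g x) = z := by
    rw [← hzval]
    exact Set.projIcc_val zero_le_one z
  rw [heq]
  exact hFC (NN x) hzF

end AuxMEA

/-- `MEA` is equivalent to the following almost-everywhere uniformization
statement: for all Polish spaces `X`, `Y`, every `A ⊆ X × Y`, and every Borel probability
measure `μ` on `X` such that the complement of `proj_X(A)` is `μ`-null, there are a Borel set
`B ⊆ X` with `μ(B) = 1` and a function `f : X → Y`, measurable with respect to the completion
of `μ`, with `(x, f x) ∈ A` for every `x ∈ B`. -/
theorem stmt_6 : MEA ↔
    (∀ (X Y : Type) [TopologicalSpace X] [TopologicalSpace Y] [PolishSpace X] [PolishSpace Y]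
      [MeasurableSpace X] [MeasurableSpace Y] [BorelSpace X] [BorelSpace Y],
      ∀ (A : Set (X × Y)) (μ : ProbabilityMeasure X),
        (μ : Measure X) (Prod.fst '' A)ᶜ = 0 →
        ∃ B : Set X, MeasurableSet B ∧ (μ : Measure X) B = 1 ∧
          ∃ f : X → Y, NullMeasurable f (μ : Measure X) ∧ ∀ x ∈ B, (x, f x) ∈ A) := by
  constructor
  · -- MEA implies a.e. uniformization
    intro hMEA X Y _ _ _ _ _ _ _ _ A μ hproj
    obtain ⟨ν, hν1, hν2⟩ := hMEA X Y A μ hproj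
    -- `Y` is nonempty
    have hA : A.Nonempty := by
      rcases A.eq_empty_or_nonempty with h | h
      · exfalso
        rw [h] at hproj
        simp only [Set.image_empty, Set.compl_empty] at hproj
        exact (one_ne_zero (by rw [← measure_univ (μ := (μ : Measure X))]; exact hproj))
      · exact h
    haveI : Nonempty Y := ⟨hA.choose.2⟩
    haveI : PolishSpace ZIcc := IsClosed.polishSpace isClosed_Icc
    -- embed `Y` into the unit interval
    obtain ⟨e, he⟩ := exists_measurableEmbedding_real Y
    have hr_lt : ∀ t : ℝ, Real.arctan t / Real.pi < 1/2 := by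
      intro t
      rw [div_lt_iff₀ Real.pi_pos]
      nlinarith [Real.arctan_lt_pi_div_two t]
    have hr_gt : ∀ t : ℝ, -(1/2) < Real.arctan t / Real.pi := by
      intro t
      rw [lt_div_iff₀ Real.pi_pos]
      nlinarith [Real.neg_pi_div_two_lt_arctan t]
    set r : ℝ → ZIcc := fun t => ⟨1/2 + Real.arctan t / Real.pi,
      ⟨by linarith [hr_gt t], by linarith [hr_lt t]⟩⟩ with hr
    have hr_meas : Measurable r := by
      apply Continuous.measurable
      exact Continuous.subtype_mk
        (continuous_const.add (Real.continuous_arctan.div_const _)) _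
    have hr_inj : Function.Injective r := by
      intro t1 t2 h12
      have h12' : (1:ℝ)/2 + Real.arctan t1 / Real.pi = 1/2 + Real.arctan t2 / Real.pi :=
        congrArg Subtype.val h12
      have : Real.arctan t1 = Real.arctan t2 := by
        field_simp at h12'
        linarith
      exact Real.arctan_injective this
    set e2 : Y → ZIcc := r ∘ e with he2def
    have he2 : MeasurableEmbedding e2 :=
      (hr_meas.comp he.measurable).measurableEmbedding (hr_inj.comp he.injective)
    set G : X × Y → X × ZIcc := fun p => (p.1, e2 p.2) with hG
    have hGemb : MeasurableEmbedding G := MeasurableEmbedding.id.prodMap he2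
    set ν' : Measure (X × ZIcc) := (ν : Measure (X × Y)).map G with hν'
    haveI : IsProbabilityMeasure ν' := Measure.isProbabilityMeasure_map hGemb.measurable.aemeasurable
    -- a Borel subset of `A` of full `ν`-measure
    obtain ⟨N, hNsub, hNm, hN0⟩ := exists_measurable_superset_of_null hν2
    have hCm : MeasurableSet Nᶜ := hNm.compl
    have hCA : Nᶜ ⊆ A := Set.compl_subset_comm.mp hNsub
    have hC1 : (ν : Measure (X × Y)) Nᶜ = 1 := by
      rw [prob_compl_eq_one_sub hNm, hN0, tsub_zero]
    set C' : Set (X × ZIcc) := G '' Nᶜ with hC'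
    have hC'm : MeasurableSet C' := hGemb.measurableSet_image' hCm
    have hC'1 : ν' C' = 1 := by
      rw [hν', hGemb.map_apply, Set.preimage_image_eq _ hGemb.injective]
      exact hC1
    obtain ⟨B, hBm, hB1, g, hgm, hgC⟩ := exists_selection_Icc ν' hC'm hC'1
    have hfst : ν'.map Prod.fst = (μ : Measure X) := by
      rw [hν', Measure.map_map measurable_fst hGemb.measurable]
      exact hν1
    refine ⟨B, hBm, by rw [← hfst]; exact hB1,
      fun x => Function.invFun e2 (g x), ?_, ?_⟩
    · exact ((measurable_invFun_of_measurableEmbedding' he2).comp hgm).nullMeasurable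
    · intro x hx
      obtain ⟨p, hpC, hpeq⟩ := hgC x hx
      have hp1 : p.1 = x := congrArg Prod.fst hpeq
      have hp2 : e2 p.2 = g x := congrArg Prod.snd hpeq
      show (x, Function.invFun e2 (g x)) ∈ A
      have hfeq : Function.invFun e2 (g x) = p.2 := by
        rw [← hp2]
        exact Function.leftInverse_invFun he2.injective p.2
      rw [hfeq]
      have : (x, p.2) = p := by rw [← hp1]
      rw [this]
      exact hCA hpC
  · -- a.e. uniformization implies MEA
    intro hsel X Y _ _ _ _ _ _ _ _ A μ hproj
    obtain ⟨B, hBm, hB1, f, hf, hfA⟩ := hsel X Y A μ hproj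
    have haem : AEMeasurable f (μ : Measure X) := hf.aemeasurable
    set g := haem.mk f with hgdef
    have hgm : Measurable g := haem.measurable_mk
    have hfg : f =ᵐ[(μ : Measure X)] g := haem.ae_eq_mk
    set h : X → X × Y := fun x => (x, g x) with hh
    have hhm : Measurable h := measurable_id.prodMk hgm
    set ν₀ : Measure (X × Y) := (μ : Measure X).map h with hν₀
    haveI : IsProbabilityMeasure ν₀ := Measure.isProbabilityMeasure_map hhm.aemeasurable
    have hE0 : (μ : Measure X) (Bᶜ ∪ {x | f x ≠ g x}) = 0 := by
      apply measure_union_null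
      · exact (prob_compl_eq_zero_iff hBm).2 hB1
      · exact hfg
    obtain ⟨N, hNsub, hNm, hN0⟩ := exists_measurable_superset_of_null hE0
    set T : Set (X × Y) := (N ×ˢ Set.univ) ∪ {p : X × Y | p.2 = g p.1}ᶜ with hT
    have hTm : MeasurableSet T := by
      refine (hNm.prod MeasurableSet.univ).union (MeasurableSet.compl ?_)
      exact MeasureTheory.StronglyMeasurable.measurableSet_eq_fun measurable_snd.stronglyMeasurable
        (hgm.comp measurable_fst).stronglyMeasurable
    have hsub : Aᶜ ⊆ T := by
      intro p hp
      by_contra hTp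
      rw [hT, Set.mem_union] at hTp
      push_neg at hTp
      obtain ⟨hp1, hp2⟩ := hTp
      have hp1' : p.1 ∉ N := fun hn => hp1 ⟨hn, Set.mem_univ _⟩
      have hp2' : p.2 = g p.1 := by simpa using hp2
      have hp1'' : p.1 ∉ Bᶜ ∪ {x | f x ≠ g x} := fun hmem => hp1' (hNsub hmem)
      rw [Set.mem_union] at hp1''
      push_neg at hp1''
      obtain ⟨hpB, hpfg⟩ := hp1''
      rw [Set.notMem_compl_iff] at hpB
      have hpfg' : f p.1 = g p.1 := by simpa using hpfg
      have : (p.1, f p.1) ∈ A := hfA p.1 hpB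
      rw [hpfg', ← hp2'] at this
      exact hp this
    have hT0 : ν₀ T = 0 := by
      rw [hν₀, Measure.map_apply hhm hTm]
      have hsub2 : h ⁻¹' T ⊆ N := by
        intro x hx
        rcases hx with hx | hx
        · exact hx.1
        · exact absurd rfl hx
      exact measure_mono_null hsub2 hN0
    refine ⟨⟨ν₀, inferInstance⟩, ?_, measure_mono_null hsub hT0⟩
    show ν₀.map Prod.fst = (μ : Measure X)
    rw [hν₀, Measure.map_map measurable_fst hhm]
    have : (Prod.fst ∘ h) = id := rfl
    rw [this, Measure.map_id]
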